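/- Let T be a finite rooted tree with vertex set V and let a : V → ℕ be integral target values. Then there exists a feasible assignment x : V → ℕ taking non-negative integer values such that ∑_{v ∈ V} |a_v − x_v| ≤ ∑_{v ∈ V} |a_v − y_v| for every feasible real-valued assignment y : V → ℝ; that is, the ℓ1-SBHSP problem on a tree with integral targets admits an integral optimal solution. -/

import Mathlib

open Finset
open scoped Classical

/-- A finite rooted tree: a distinguished root and a parent function under which
every vertex eventually reaches the root. -/
structure SBHTree (V : Type*) [Fintype V] [DecidableEq V] where
  root : V
  parent : V → V
  parent_root : parent root = root
  reaches_root : ∀ v : V, ∃ n : ℕ, parent^[n] v = root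

/-- The set of children of a vertex `v`. -/
def SBHTree.children {V : Type*} [Fintype V] [DecidableEq V]
    (T : SBHTree V) (v : V) : Finset V :=
  univ.filter (fun u => u ≠ T.root ∧ T.parent u = v)

/-- An assignment is feasible if it is non-negative and the value at each vertex is
at least the sum of the values at its children. -/
def SBHTree.Feasible {V : Type*} [Fintype V] [DecidableEq V]
    (T : SBHTree V) (x : V → ℝ) : Prop :=
  (∀ v, 0 ≤ x v) ∧ ∀ v, (∑ u ∈ T.children v, x u) ≤ x v


namespace SBHAux
open intervalIntegral MeasureTheory

lemma floor_intg {s : ℝ} (hs0 : 0 ≤ s) (hs1 : s < 1) :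
    ∫ θ in (0:ℝ)..1, ((⌊θ + s⌋ : ℤ) : ℝ) = s := by
  have hmono : Monotone (fun θ : ℝ => ((⌊θ + s⌋ : ℤ) : ℝ)) := by
    intro x y hxy
    simp only []
    exact_mod_cast Int.floor_mono (by linarith : x + s ≤ y + s)
  have h1s : (0:ℝ) ≤ 1 - s := by linarith
  have hsplit : ∫ θ in (0:ℝ)..1, ((⌊θ + s⌋ : ℤ) : ℝ)
      = (∫ θ in (0:ℝ)..(1-s), ((⌊θ + s⌋ : ℤ) : ℝ))
        + ∫ θ in (1-s:ℝ)..1, ((⌊θ + s⌋ : ℤ) : ℝ) := by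
    rw [integral_add_adjacent_intervals] <;> exact hmono.intervalIntegrable
  have hI2 : ∫ θ in (1-s:ℝ)..1, ((⌊θ + s⌋ : ℤ) : ℝ) = s := by
    have he : ∫ θ in (1-s:ℝ)..1, ((⌊θ + s⌋ : ℤ) : ℝ) = ∫ θ in (1-s:ℝ)..1, (1:ℝ) := by
      apply integral_congr
      intro θ hθ
      rw [Set.uIcc_of_le (by linarith)] at hθ
      obtain ⟨h1, h2⟩ := hθ
      have hf : ⌊θ + s⌋ = 1 := by
        rw [Int.floor_eq_iff]
        constructor <;> push_cast <;> linarith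
      simp only [hf]; norm_num
    rw [he, intervalIntegral.integral_const, smul_eq_mul]; ring
  have hI1 : ∫ θ in (0:ℝ)..(1-s), ((⌊θ + s⌋ : ℤ) : ℝ) = 0 := by
    have he : ∫ θ in (0:ℝ)..(1-s), ((⌊θ + s⌋ : ℤ) : ℝ) = ∫ θ in (0:ℝ)..(1-s), (0:ℝ) := by
      apply intervalIntegral.integral_congr_ae
      have hnull : (volume : Measure ℝ) {θ : ℝ | ¬ (θ ∈ Set.uIoc (0:ℝ) (1-s) → ((⌊θ + s⌋ : ℤ) : ℝ) = 0)} = 0 := by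
        apply measure_mono_null (t := {(1:ℝ) - s})
        · intro θ hθ
          simp only [Set.mem_setOf_eq, _root_.not_imp] at hθ
          obtain ⟨hmem, hne⟩ := hθ
          rw [Set.uIoc_of_le (by linarith)] at hmem
          by_contra hne2
          have hθlt : θ < 1 - s := lt_of_le_of_ne hmem.2 (by simpa using hne2)
          have hf : ⌊θ + s⌋ = 0 := by
            rw [Int.floor_eq_iff]
            constructor <;> push_cast <;> [linarith [hmem.1]; linarith]
          exact hne (by simp [hf])
        · exact measure_singleton _
      exact (ae_iff.2 hnull)
    rw [he]; simp
  rw [hsplit, hI1, hI2]; ring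

lemma ceil_intg (c : ℝ) : ∫ θ in (0:ℝ)..1, ((⌈c - θ⌉ : ℤ) : ℝ) = c := by
  set m : ℤ := ⌈c⌉ with hm
  set s : ℝ := (m : ℝ) - c with hs
  have hs0 : 0 ≤ s := by simp [hs]; exact Int.le_ceil c
  have hs1 : s < 1 := by
    simp only [hs, sub_lt_iff_lt_add]
    have := Int.ceil_lt_add_one c
    linarith
  have hkey : ∀ θ : ℝ, (⌈c - θ⌉ : ℤ) = m - ⌊θ + s⌋ := by
    intro θ
    have h1 : (⌈c - θ⌉ : ℤ) = -⌊-(c-θ)⌋ := by rw [Int.floor_neg]; ring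
    have h2 : -(c - θ) = (θ + s) - (m:ℝ) := by simp only [hs]; ring
    rw [h1, h2, Int.floor_sub_intCast]
    ring
  have : ∀ θ : ℝ, ((⌈c - θ⌉ : ℤ) : ℝ) = (m : ℝ) - ((⌊θ + s⌋ : ℤ) : ℝ) := by
    intro θ; rw [hkey θ]; push_cast; ring
  rw [integral_congr (fun θ _ => this θ)]
  have hmono : Monotone (fun θ : ℝ => ((⌊θ + s⌋ : ℤ) : ℝ)) := by
    intro x y hxy
    simp only []
    exact_mod_cast Int.floor_mono (by linarith : x + s ≤ y + s)
  rw [integral_sub intervalIntegrable_const hmono.intervalIntegrable]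
  rw [intervalIntegral.integral_const, floor_intg hs0 hs1]
  simp [hs]

lemma ceil_ii (c : ℝ) : IntervalIntegrable (fun θ : ℝ => ((⌈c - θ⌉ : ℤ) : ℝ)) volume 0 1 := by
  have : Antitone (fun θ : ℝ => ((⌈c - θ⌉ : ℤ) : ℝ)) := by
    intro x y hxy
    simp only []
    exact_mod_cast Int.ceil_mono (by linarith : c - y ≤ c - x)
  exact this.intervalIntegrable

lemma obj_ii (a : ℝ) (Ev Bv : ℝ) :
    IntervalIntegrable (fun θ : ℝ => |a - ((⌈Ev - θ⌉ - ⌈Bv - θ⌉ : ℤ) : ℝ)|) volume 0 1 := by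
  have h : IntervalIntegrable (fun θ : ℝ => a - ((⌈Ev - θ⌉ - ⌈Bv - θ⌉ : ℤ) : ℝ)) volume 0 1 := by
    have := (intervalIntegrable_const (c := a) (μ := volume) (a := (0:ℝ)) (b := 1)).sub
      ((ceil_ii Ev).sub (ceil_ii Bv))
    apply this.congr
    intro θ _
    push_cast
    ring
  exact h.abs

lemma abs_intg (a : ℕ) (Ev Bv : ℝ) (hBE : Bv ≤ Ev) :
    ∫ θ in (0:ℝ)..1, |(a : ℝ) - ((⌈Ev - θ⌉ - ⌈Bv - θ⌉ : ℤ) : ℝ)|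
      = |(a : ℝ) - (Ev - Bv)| := by
  have hlb : ∀ θ : ℝ, (Ev - Bv) - 1 < ((⌈Ev - θ⌉ - ⌈Bv - θ⌉ : ℤ) : ℝ) := by
    intro θ
    have h1 := Int.le_ceil (Ev - θ)
    have h2 := Int.ceil_lt_add_one (Bv - θ)
    push_cast
    linarith
  have hub : ∀ θ : ℝ, ((⌈Ev - θ⌉ - ⌈Bv - θ⌉ : ℤ) : ℝ) < (Ev - Bv) + 1 := by
    intro θ
    have h1 := Int.ceil_lt_add_one (Ev - θ)
    have h2 := Int.le_ceil (Bv - θ)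
    push_cast
    linarith
  have hsub : ∫ θ in (0:ℝ)..1, ((⌈Ev - θ⌉ - ⌈Bv - θ⌉ : ℤ) : ℝ) = Ev - Bv := by
    have he : ∀ θ ∈ Set.uIcc (0:ℝ) 1, ((⌈Ev - θ⌉ - ⌈Bv - θ⌉ : ℤ) : ℝ)
        = ((⌈Ev - θ⌉ : ℤ) : ℝ) - ((⌈Bv - θ⌉ : ℤ) : ℝ) := by
      intro θ _; push_cast; ring
    rw [intervalIntegral.integral_congr he,
      intervalIntegral.integral_sub (ceil_ii Ev) (ceil_ii Bv), ceil_intg, ceil_intg]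
  by_cases hcase : (a : ℝ) ≤ Ev - Bv
  · have hpt : ∀ θ : ℝ, |(a : ℝ) - ((⌈Ev - θ⌉ - ⌈Bv - θ⌉ : ℤ) : ℝ)|
        = ((⌈Ev - θ⌉ - ⌈Bv - θ⌉ : ℤ) : ℝ) - a := by
      intro θ
      have hile : (a : ℤ) ≤ ⌈Ev - θ⌉ - ⌈Bv - θ⌉ := by
        have : ((a : ℤ) : ℝ) - 1 < ((⌈Ev - θ⌉ - ⌈Bv - θ⌉ : ℤ) : ℝ) := by
          push_cast; have := hlb θ; push_cast at this ⊢; linarith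
        have : (a : ℤ) - 1 < ⌈Ev - θ⌉ - ⌈Bv - θ⌉ := by exact_mod_cast (by push_cast at this ⊢; linarith : ((a:ℤ):ℝ) - 1 < ((⌈Ev - θ⌉ - ⌈Bv - θ⌉ : ℤ):ℝ))
        omega
      have : (a : ℝ) ≤ ((⌈Ev - θ⌉ - ⌈Bv - θ⌉ : ℤ) : ℝ) := by exact_mod_cast hile
      rw [abs_of_nonpos (by linarith)]; ring
    rw [intervalIntegral.integral_congr (fun θ _ => hpt θ)]
    rw [intervalIntegral.integral_sub ((ceil_ii Ev).sub (ceil_ii Bv) |>.congr (by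
        intro θ _; push_cast; ring)) intervalIntegrable_const]
    rw [hsub, intervalIntegral.integral_const, smul_eq_mul]
    rw [abs_of_nonpos (by linarith)]
    ring
  · push_neg at hcase
    have hpt : ∀ θ : ℝ, |(a : ℝ) - ((⌈Ev - θ⌉ - ⌈Bv - θ⌉ : ℤ) : ℝ)|
        = (a : ℝ) - ((⌈Ev - θ⌉ - ⌈Bv - θ⌉ : ℤ) : ℝ) := by
      intro θ
      have hile : ⌈Ev - θ⌉ - ⌈Bv - θ⌉ ≤ (a : ℤ) := by
        have : ((⌈Ev - θ⌉ - ⌈Bv - θ⌉ : ℤ) : ℝ) < ((a : ℤ) : ℝ) + 1 := by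
          have := hub θ; push_cast at this ⊢; linarith
        have : (⌈Ev - θ⌉ - ⌈Bv - θ⌉ : ℤ) < (a : ℤ) + 1 := by exact_mod_cast this
        omega
      have : ((⌈Ev - θ⌉ - ⌈Bv - θ⌉ : ℤ) : ℝ) ≤ (a : ℝ) := by exact_mod_cast hile
      rw [abs_of_nonneg (by linarith)]
    rw [intervalIntegral.integral_congr (fun θ _ => hpt θ)]
    rw [intervalIntegral.integral_sub intervalIntegrable_const ((ceil_ii Ev).sub (ceil_ii Bv) |>.congr (by
        intro θ _; push_cast; ring))]
    rw [hsub, intervalIntegral.integral_const, smul_eq_mul]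
    rw [abs_of_nonneg (by linarith)]
    ring

lemma exists_pt (f : ℝ → ℝ) (hf : IntervalIntegrable f volume 0 1) :
    ∃ θ : ℝ, f θ ≤ ∫ t in (0:ℝ)..1, f t := by
  set μ : Measure ℝ := volume.restrict (Set.Ioc (0:ℝ) 1) with hμdef
  have huniv : μ Set.univ = 1 := by
    rw [hμdef, Measure.restrict_apply_univ, Real.volume_Ioc]
    norm_num
  have hμ : μ ≠ 0 := by
    intro h
    rw [h] at huniv
    simp at huniv
  have hint : Integrable f μ := hf.1
  obtain ⟨x, hx⟩ := MeasureTheory.exists_le_average hμ hint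
  refine ⟨x, ?_⟩
  rw [average_eq, measureReal_def, huniv] at hx
  simpa [intervalIntegral.integral_of_le (zero_le_one (α := ℝ))] using hx


variable {V : Type*} [Fintype V] [DecidableEq V]

noncomputable def depth (T : SBHTree V) (v : V) : ℕ := Nat.find (T.reaches_root v)

lemma depth_spec (T : SBHTree V) (v : V) : T.parent^[depth T v] v = T.root :=
  Nat.find_spec (T.reaches_root v)

lemma depth_parent_lt (T : SBHTree V) {v : V} (h : v ≠ T.root) :
    depth T (T.parent v) < depth T v := by
  have h0 : depth T v ≠ 0 := by
    intro h0
    have := depth_spec T v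
    rw [h0] at this
    exact h this
  obtain ⟨n, hn⟩ := Nat.exists_eq_succ_of_ne_zero h0
  have hs : T.parent^[n] (T.parent v) = T.root := by
    have := depth_spec T v
    rw [hn, Function.iterate_succ_apply] at this
    exact this
  have : depth T (T.parent v) ≤ n := Nat.find_le hs
  omega

noncomputable def EE (T : SBHTree V) [LinearOrder V] (y : V → ℝ) (v : V) : ℝ :=
  if h : v = T.root then y T.root
  else EE T y (T.parent v)
    - ∑ w ∈ (T.children (T.parent v)).filter (fun w => v < w), y w
termination_by depth T v
decreasing_by exact depth_parent_lt T h

lemma EE_child (T : SBHTree V) [LinearOrder V] (y : V → ℝ) {u v : V}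
    (hu : u ∈ T.children v) :
    EE T y u = EE T y v - ∑ w ∈ (T.children v).filter (fun w => u < w), y w := by
  simp only [SBHTree.children, mem_filter, mem_univ, true_and] at hu
  rw [EE]
  rw [dif_neg hu.1, hu.2]

lemma tel [LinearOrder V] (y : V → ℝ) (C : Finset V) :
    ∀ G : ℝ → ℤ,
      (∑ u ∈ C, (G (∑ w ∈ C.filter (fun w => u < w), y w)
        - G ((∑ w ∈ C.filter (fun w => u < w), y w) + y u)))
      = G 0 - G (∑ u ∈ C, y u) := by
  induction C using Finset.induction_on_max with
  | empty => simp
  | insert a s ha ih =>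
    intro G
    have hanotin : a ∉ s := fun h => lt_irrefl a (ha a h)
    have hfa : (insert a s).filter (fun w => a < w) = ∅ := by
      ext w
      simp only [mem_filter, mem_insert, notMem_empty, iff_false, not_and]
      rintro (rfl | hw)
      · exact lt_irrefl _
      · exact fun hlt => absurd (ha w hw) (not_lt.2 hlt.le)
    have hfu : ∀ u ∈ s, (insert a s).filter (fun w => u < w)
        = insert a (s.filter (fun w => u < w)) := by
      intro u hu
      ext w
      simp only [mem_filter, mem_insert]
      constructor
      · rintro ⟨rfl | hw, hlt⟩
        · exact Or.inl rfl
        · exact Or.inr ⟨hw, hlt⟩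
      · rintro (rfl | ⟨hw, hlt⟩)
        · exact ⟨Or.inl rfl, ha u hu⟩
        · exact ⟨Or.inr hw, hlt⟩
    rw [Finset.sum_insert hanotin, Finset.sum_insert hanotin, hfa]
    have hterm : ∀ u ∈ s,
        (G (∑ w ∈ (insert a s).filter (fun w => u < w), y w)
          - G ((∑ w ∈ (insert a s).filter (fun w => u < w), y w) + y u))
        = ((fun t => G (y a + t)) (∑ w ∈ s.filter (fun w => u < w), y w)
          - (fun t => G (y a + t)) ((∑ w ∈ s.filter (fun w => u < w), y w) + y u)) := by
      intro u hu
      have hna : a ∉ s.filter (fun w => u < w) := fun h => hanotin (mem_of_mem_filter a h)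
      rw [hfu u hu, Finset.sum_insert hna]
      simp only []
      rw [add_assoc]
    rw [Finset.sum_congr rfl hterm, ih (fun t => G (y a + t))]
    simp only [sum_empty, add_zero, zero_add]
    ring_nf



set_option maxHeartbeats 2000000 in
open MeasureTheory in
lemma round_exists (T : SBHTree V) (a : V → ℕ) (y : V → ℝ) (hy : T.Feasible y) :
    ∃ x : V → ℕ, T.Feasible (fun v => (x v : ℝ)) ∧
      (∑ v, |(a v : ℝ) - (x v : ℝ)|) ≤ ∑ v, |(a v : ℝ) - y v| := by
  classical
  obtain ⟨f, hf⟩ : ∃ f : V → Fin (Fintype.card V), Function.Injective f :=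
    ⟨Fintype.equivFin V, (Fintype.equivFin V).injective⟩
  letI : LinearOrder V := LinearOrder.lift' f hf
  set E : V → ℝ := SBHAux.EE T y with hE
  set g : V → ℝ → ℝ := fun v θ =>
    |(a v : ℝ) - ((⌈E v - θ⌉ - ⌈(E v - y v) - θ⌉ : ℤ) : ℝ)| with hg
  set F : ℝ → ℝ := fun θ => ∑ v, g v θ with hF
  have hii : ∀ v : V, IntervalIntegrable (g v) volume 0 1 :=
    fun v => SBHAux.obj_ii (a v) (E v) (E v - y v)
  have hFii : IntervalIntegrable F volume 0 1 := by
    rw [hF]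
    have hsf : (fun θ : ℝ => ∑ v : V, g v θ) = ∑ v : V, g v := by
      funext θ
      simp [Finset.sum_apply]
    rw [hsf]
    exact IntervalIntegrable.sum univ (fun v _ => hii v)
  have hFint : ∫ θ in (0:ℝ)..1, F θ = ∑ v, |(a v : ℝ) - y v| := by
    rw [hF]
    rw [intervalIntegral.integral_finset_sum (fun v _ => hii v)]
    refine Finset.sum_congr rfl fun v _ => ?_
    rw [SBHAux.abs_intg (a v) (E v) (E v - y v) (by linarith [hy.1 v])]
    congr 1
    ring
  obtain ⟨θ, hθ⟩ := SBHAux.exists_pt F hFii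
  set zi : V → ℤ := fun v => ⌈E v - θ⌉ - ⌈(E v - y v) - θ⌉ with hzi
  have hzi0 : ∀ v, 0 ≤ zi v := by
    intro v
    have : E v - y v - θ ≤ E v - θ := by linarith [hy.1 v]
    simp only [hzi, sub_nonneg]
    exact Int.ceil_le_ceil this
  refine ⟨fun v => (zi v).toNat, ?_, ?_⟩
  · constructor
    · intro v
      positivity
    · intro v
      have hcast : ∀ u : V, (((zi u).toNat : ℕ) : ℝ) = ((zi u : ℤ) : ℝ) := by
        intro u
        exact_mod_cast congrArg (fun n : ℤ => (n : ℝ)) (Int.toNat_of_nonneg (hzi0 u))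
      simp only [hcast]
      have hint : (∑ u ∈ T.children v, zi u) ≤ zi v := by
        have htel := SBHAux.tel y (T.children v) (fun t => ⌈E v - t - θ⌉)
        have hterm : ∀ u ∈ T.children v,
            zi u = (fun t => ⌈E v - t - θ⌉) (∑ w ∈ (T.children v).filter (fun w => u < w), y w)
              - (fun t => ⌈E v - t - θ⌉)
                ((∑ w ∈ (T.children v).filter (fun w => u < w), y w) + y u) := by
          intro u hu
          have hEu := SBHAux.EE_child T y hu
          simp only [hzi]
          rw [← hE] at hEu
          rw [hEu]
          congr 2 <;> ring
        rw [Finset.sum_congr rfl hterm, htel]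
        have h1 : E v - y v - θ ≤ E v - (∑ u ∈ T.children v, y u) - θ := by
          have := hy.2 v
          linarith
        have h2 := Int.ceil_le_ceil h1
        have h3 : (⌈E v - 0 - θ⌉ : ℤ) = ⌈E v - θ⌉ := by norm_num
        simp only [h3]
        simp only [hzi]
        omega
      exact_mod_cast hint
  · have hFθ : F θ = ∑ v, |(a v : ℝ) - (((zi v).toNat : ℕ) : ℝ)| := by
      rw [hF]
      refine Finset.sum_congr rfl fun v _ => ?_
      rw [hg]
      congr 1
      have : (((zi v).toNat : ℕ) : ℝ) = ((zi v : ℤ) : ℝ) := by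
        exact_mod_cast congrArg (fun n : ℤ => (n : ℝ)) (Int.toNat_of_nonneg (hzi0 v))
      rw [this]
    calc ∑ v, |(a v : ℝ) - (((zi v).toNat : ℕ) : ℝ)| = F θ := hFθ.symm
      _ ≤ ∫ t in (0:ℝ)..1, F t := hθ
      _ = ∑ v, |(a v : ℝ) - y v| := hFint

end SBHAux

/-- On a finite rooted tree with integral targets `a : V → ℕ`,
the ℓ1-SBHSP problem admits an integral optimal solution: there is a feasible
assignment with non-negative integer values whose ℓ1 objective is at most that of
every feasible real-valued assignment. -/
theorem stmt_10 {V : Type*} [Fintype V] [DecidableEq V] (T : SBHTree V)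
    (a : V → ℕ) :
    ∃ x : V → ℕ, T.Feasible (fun v => (x v : ℝ)) ∧
      ∀ y : V → ℝ, T.Feasible y →
        (∑ v, |(a v : ℝ) - (x v : ℝ)|) ≤ ∑ v, |(a v : ℝ) - y v| := by
  classical
  have hcast : ∀ x : V → ℕ, (∑ v, |(a v : ℝ) - (x v : ℝ)|)
      = ((∑ v, ((a v : ℤ) - (x v : ℤ)).natAbs : ℕ) : ℝ) := by
    intro x
    push_cast
    refine Finset.sum_congr rfl fun v _ => ?_
    rw [Nat.cast_natAbs]
    push_cast
    ring_nf
  have hS : ∃ n : ℕ, ∃ x : V → ℕ, T.Feasible (fun v => (x v : ℝ)) ∧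
      (∑ v, ((a v : ℤ) - (x v : ℤ)).natAbs) = n := by
    refine ⟨_, fun _ => 0, ⟨fun v => by norm_num, fun v => by simp⟩, rfl⟩
  obtain ⟨x, hxfeas, hxobj⟩ := Nat.find_spec hS
  refine ⟨x, hxfeas, ?_⟩
  intro y hyfeas
  obtain ⟨z, hzfeas, hzobj⟩ := SBHAux.round_exists T a y hyfeas
  have hmin : Nat.find hS ≤ ∑ v, ((a v : ℤ) - (z v : ℤ)).natAbs :=
    Nat.find_min' hS ⟨z, hzfeas, rfl⟩
  calc ∑ v, |(a v : ℝ) - (x v : ℝ)|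
      = ((∑ v, ((a v : ℤ) - (x v : ℤ)).natAbs : ℕ) : ℝ) := hcast x
    _ = ((Nat.find hS : ℕ) : ℝ) := by rw [hxobj]
    _ ≤ ((∑ v, ((a v : ℤ) - (z v : ℤ)).natAbs : ℕ) : ℝ) := by exact_mod_cast hmin
    _ = ∑ v, |(a v : ℝ) - (z v : ℝ)| := (hcast z).symm
    _ ≤ ∑ v, |(a v : ℝ) - y v| := hzobj
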